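/- The set function μ̄_ā defined on homogeneous unions of cylinder sets by μ̄_ā(⋃_{b∈K} E(b)) = Σ_{b∈K} g_ā(b) is well-defined and countably additive on the Boolean algebra ℰ: if (A_n)_{n∈ℕ} is a family of pairwise disjoint elements of ℰ whose union lies in ℰ, then μ̄_ā(⋃_n A_n) = Σ_n μ̄_ā(A_n). Moreover μ̄_ā(F) ≤ 1, so μ̄_ā is a finite pre-measure. -/

import Mathlib

/-- The cylinder set of infinite sequences beginning with the finite word `b`. -/
def cylinder {O : Type*} (b : List O) : Set (ℕ → O) :=
  {x | ∀ (i : ℕ) (h : i < b.length), x i = b.get ⟨i, h⟩}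

/-- The Boolean algebra of homogeneous unions of cylinder sets. -/
def cylAlg (O : Type*) : Set (Set (ℕ → O)) :=
  {S | ∃ (k : ℕ) (K : Set (List O)), (∀ b ∈ K, b.length = k) ∧ S = ⋃ b ∈ K, cylinder b}


namespace Stmt4Aux

variable {O : Type*}

lemma mem_cylinder {b : List O} {x : ℕ → O} :
    x ∈ cylinder b ↔ ∀ (i : ℕ) (h : i < b.length), x i = b[i] := Iff.rfl

lemma cyl_nonempty [Nonempty O] (b : List O) : (cylinder b).Nonempty := by
  refine ⟨fun i => if h : i < b.length then b[i] else Classical.arbitrary O, fun i h => ?_⟩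
  simp [h]

lemma eq_of_mem_cylinder {b b' : List O} (hl : b.length = b'.length) {x : ℕ → O}
    (hx : x ∈ cylinder b) (hx' : x ∈ cylinder b') : b = b' := by
  refine List.ext_getElem hl fun i h h' => ?_
  have h1 := hx i h; have h2 := hx' i h'
  simp only [List.get_eq_getElem] at h1 h2
  rw [← h1, ← h2]

lemma cyl_subset_append (b w : List O) : cylinder (b ++ w) ⊆ cylinder b := by
  intro x hx i h
  have h2 : i < (b ++ w).length := by simp; omega
  have := hx i h2
  simpa [List.getElem_append, h] using this

end Stmt4Aux

namespace Stmt4Aux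
variable {O : Type*}

lemma mem_cylinder_snoc {b : List O} {c : O} {x : ℕ → O} :
    x ∈ cylinder (b ++ [c]) ↔ x ∈ cylinder b ∧ x b.length = c := by
  constructor
  · intro h
    refine ⟨cyl_subset_append b [c] h, ?_⟩
    have hl : b.length < (b ++ [c]).length := by simp
    have := h b.length hl
    simpa using this
  · rintro ⟨h1, h2⟩ i hi
    simp only [List.length_append, List.length_singleton] at hi
    rcases Nat.lt_or_ge i b.length with h | h
    · have := h1 i h
      simp only [List.get_eq_getElem] at this ⊢
      rw [List.getElem_append_left h]
      exact this
    · have hi' : i = b.length := by omega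
      subst hi'
      simp only [List.get_eq_getElem]
      rw [List.getElem_append_right (le_refl _)]
      simpa using h2

lemma cylinder_eq_iUnion (b : List O) : cylinder b = ⋃ c : O, cylinder (b ++ [c]) := by
  ext x
  simp only [Set.mem_iUnion, mem_cylinder_snoc]
  constructor
  · intro h; exact ⟨x b.length, h, rfl⟩
  · rintro ⟨c, h, _⟩; exact h

end Stmt4Aux

noncomputable section
namespace Stmt4Aux
open MeasureTheory

instance listMS (O : Type*) : MeasurableSpace (List O) := ⊤

lemma listMeas {O : Type*} (K : Set (List O)) : MeasurableSet K := trivial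

def wm {O : Type*} (g : List O → ℝ) : Measure (List O) :=
  Measure.sum (fun b => ENNReal.ofReal (g b) • Measure.dirac b)

variable {O : Type*}

lemma wm_apply (g : List O → ℝ) (K : Set (List O)) :
    wm g K = ∑' b : K, ENNReal.ofReal (g b) := by
  rw [wm, Measure.sum_apply _ (listMeas K), tsum_subtype K (fun b => ENNReal.ofReal (g b))]
  congr 1
  ext b
  rw [Measure.smul_apply, Measure.dirac_apply' _ (listMeas K), smul_eq_mul]
  by_cases hb : b ∈ K <;> simp [Set.indicator, hb]

end Stmt4Aux
end

noncomputable section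
namespace Stmt4Aux
open MeasureTheory
variable {O : Type*}

lemma snoc_inj {k : ℕ} {b b' : List O} {c c' : O} (hb : b.length = k) (hb' : b'.length = k)
    (h : b ++ [c] = b' ++ [c']) : b = b' ∧ c = c' := by
  obtain ⟨h1, h2⟩ := List.append_inj h (hb.trans hb'.symm)
  exact ⟨h1, by simpa using h2⟩

lemma wm_extend [Countable O] (g : List O → ℝ) (hg0 : ∀ b, 0 ≤ g b)
    (hgcons : ∀ b : List O, HasSum (fun c : O => g (b ++ [c])) (g b))
    {k : ℕ} (K : Set (List O)) (hK : ∀ b ∈ K, b.length = k) :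
    wm g (⋃ b ∈ K, Set.range (fun c : O => b ++ [c])) = wm g K := by
  have hinj : ∀ b : List O, Function.Injective (fun c : O => b ++ [c]) := by
    intro b c c' h
    simpa using List.append_cancel_left h
  rw [measure_biUnion K.to_countable ?_ (fun b _ => listMeas _)]
  · rw [wm_apply]
    congr 1
    ext ⟨b, hb⟩
    rw [wm_apply, tsum_range (fun l => ENNReal.ofReal (g l)) (hinj b)]
    rw [← ENNReal.ofReal_tsum_of_nonneg (fun c => hg0 _) (hgcons b).summable,
      (hgcons b).tsum_eq]
  · intro b hb b' hb' hne
    simp only [Function.onFun]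
    rw [Set.disjoint_left]
    rintro _ ⟨c, rfl⟩ ⟨c', hc'⟩
    exact hne (snoc_inj (hK b hb) (hK b' hb') hc'.symm).1

end Stmt4Aux
end

noncomputable section
namespace Stmt4Aux
open MeasureTheory
variable {O : Type*}

def cylSet (S : Set (ℕ → O)) (k : ℕ) : Set (List O) :=
  {b | b.length = k ∧ cylinder b ⊆ S}

lemma cylSet_len {S : Set (ℕ → O)} {k : ℕ} : ∀ b ∈ cylSet S k, b.length = k :=
  fun _ hb => hb.1

def muF (g : List O → ℝ) (S : Set (ℕ → O)) : ENNReal := ⨆ k, wm g (cylSet S k)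

lemma snocSet_subset (S : Set (ℕ → O)) (k : ℕ) :
    (⋃ b ∈ cylSet S k, Set.range (fun c : O => b ++ [c])) ⊆ cylSet S (k + 1) := by
  intro b' hb'
  simp only [Set.mem_iUnion, Set.mem_range] at hb'
  obtain ⟨b, hb, c, rfl⟩ := hb'
  exact ⟨by simp [hb.1], (cyl_subset_append b [c]).trans hb.2⟩

lemma wm_cylSet_mono [Countable O] (g : List O → ℝ) (hg0 : ∀ b, 0 ≤ g b)
    (hgcons : ∀ b : List O, HasSum (fun c : O => g (b ++ [c])) (g b))
    (S : Set (ℕ → O)) (k : ℕ) :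
    wm g (cylSet S k) ≤ wm g (cylSet S (k + 1)) := by
  rw [← wm_extend g hg0 hgcons (cylSet S k) cylSet_len]
  exact measure_mono (snocSet_subset S k)

lemma cylSet_eq [Nonempty O] {k : ℕ} {K : Set (List O)} (hK : ∀ b ∈ K, b.length = k) :
    cylSet (⋃ b ∈ K, cylinder b) k = K := by
  ext b
  constructor
  · rintro ⟨hlen, hsub⟩
    obtain ⟨x, hx⟩ := cyl_nonempty b
    obtain ⟨b', hb', hx'⟩ : ∃ b' ∈ K, x ∈ cylinder b' := by
      simpa using hsub hx
    rwa [eq_of_mem_cylinder (hlen.trans (hK b' hb').symm) hx hx']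
  · intro hb
    exact ⟨hK b hb, Set.subset_biUnion_of_mem hb⟩

def isRepr (S : Set (ℕ → O)) (k : ℕ) : Prop := S = ⋃ b ∈ cylSet S k, cylinder b

lemma isRepr_of_mem [Nonempty O] {S : Set (ℕ → O)} (h : S ∈ cylAlg O) :
    ∃ k, isRepr S k := by
  obtain ⟨k, K, hK, rfl⟩ := h
  exact ⟨k, by rw [isRepr, cylSet_eq hK]⟩

lemma cylSet_succ_eq {S : Set (ℕ → O)} {k : ℕ} (h : isRepr S k) :
    cylSet S (k + 1) = ⋃ b ∈ cylSet S k, Set.range (fun c : O => b ++ [c]) := by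
  refine le_antisymm ?_ (snocSet_subset S k)
  rintro b' ⟨hlen, hsub⟩
  have hsplit : b'.take k ++ [b'[k]'(by omega)] = b' := by
    rw [List.take_concat_get']
    exact List.take_of_length_le (le_of_eq hlen)
  simp only [Set.mem_iUnion, Set.mem_range]
  refine ⟨b'.take k, ⟨by simp [hlen], ?_⟩, b'[k]'(by omega), hsplit⟩
  -- cylinder (b'.take k) ⊆ S
  intro x hx
  set b := b'.take k with hbdef
  have hblen : b.length = k := by simp [hbdef, hlen]
  set x' : ℕ → O := fun i => if i = k then b'[k]'(by omega) else x i with hx'def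
  have hx'b : x' ∈ cylinder b := by
    intro i hi
    have hik : i ≠ k := by rw [hblen] at hi; omega
    have := hx i hi
    simpa [hx'def, hik] using this
  have hx'b' : x' ∈ cylinder b' := by
    rw [← hsplit]
    rw [mem_cylinder_snoc]
    exact ⟨hx'b, by simp [hx'def, hblen]⟩
  have hx'S : x' ∈ S := hsub hx'b'
  rw [h] at hx'S
  simp only [Set.mem_iUnion] at hx'S
  obtain ⟨b'', hb'', hx'b''⟩ := hx'S
  refine hb''.2 ?_
  intro i hi
  have hik : i ≠ k := by rw [hb''.1] at hi; omega
  have := hx'b'' i hi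
  simpa [hx'def, hik] using this

end Stmt4Aux
end

noncomputable section
namespace Stmt4Aux
open MeasureTheory
variable {O : Type*}

lemma isRepr_succ {S : Set (ℕ → O)} {k : ℕ} (h : isRepr S k) : isRepr S (k + 1) := by
  rw [isRepr]
  refine le_antisymm ?_ ?_
  case refine_2 =>
    intro x hx
    simp only [Set.mem_iUnion] at hx
    obtain ⟨b, hb, hxb⟩ := hx
    exact hb.2 hxb
  intro x hx
  rw [h] at hx
  simp only [Set.mem_iUnion] at hx ⊢
  obtain ⟨b, hb, hxb⟩ := hx
  refine ⟨b ++ [x b.length], ?_, ?_⟩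
  · apply snocSet_subset S k
    simp only [Set.mem_iUnion, Set.mem_range]
    exact ⟨b, hb, x b.length, rfl⟩
  · rw [mem_cylinder_snoc]
    exact ⟨hxb, rfl⟩

lemma isRepr_ge [Countable O] {g : List O → ℝ} (hg0 : ∀ b, 0 ≤ g b)
    (hgcons : ∀ b : List O, HasSum (fun c : O => g (b ++ [c])) (g b))
    {S : Set (ℕ → O)} {k : ℕ} (h : isRepr S k) :
    ∀ j, k ≤ j → isRepr S j ∧ wm g (cylSet S j) = wm g (cylSet S k) := by
  intro j hj
  induction j with
  | zero => obtain rfl : k = 0 := by omega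
            exact ⟨h, rfl⟩
  | succ n ih =>
    rcases Nat.lt_or_ge k (n+1) with hlt | hge
    · obtain ⟨hr, hw⟩ := ih (by omega)
      refine ⟨isRepr_succ hr, ?_⟩
      rw [← hw, cylSet_succ_eq hr, wm_extend g hg0 hgcons _ cylSet_len]
    · obtain rfl : k = n + 1 := by omega
      exact ⟨h, rfl⟩

lemma muF_eq [Countable O] {g : List O → ℝ} (hg0 : ∀ b, 0 ≤ g b)
    (hgcons : ∀ b : List O, HasSum (fun c : O => g (b ++ [c])) (g b))
    {S : Set (ℕ → O)} {k : ℕ} (h : isRepr S k) :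
    muF g S = wm g (cylSet S k) := by
  refine le_antisymm (iSup_le fun j => ?_) (le_iSup (fun j => wm g (cylSet S j)) k)
  rcases le_total j k with hj | hj
  · calc wm g (cylSet S j) ≤ wm g (cylSet S k) := by
          have : Monotone fun j => wm g (cylSet S j) :=
            monotone_nat_of_le_succ (wm_cylSet_mono g hg0 hgcons S)
          exact this hj
      _ = wm g (cylSet S k) := rfl
  · exact le_of_eq (isRepr_ge hg0 hgcons h j hj).2

lemma muF_mono (g : List O → ℝ) {S S' : Set (ℕ → O)} (h : S ⊆ S') :
    muF g S ≤ muF g S' := by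
  refine iSup_mono fun k => measure_mono fun b hb => ⟨hb.1, hb.2.trans h⟩

end Stmt4Aux
end

noncomputable section
namespace Stmt4Aux
open MeasureTheory
variable {O : Type*}

lemma cylSet_disjoint [Nonempty O] {S S' : Set (ℕ → O)} (h : Disjoint S S') (k : ℕ) :
    Disjoint (cylSet S k) (cylSet S' k) := by
  rw [Set.disjoint_left]
  rintro b ⟨_, hb⟩ ⟨_, hb'⟩
  obtain ⟨x, hx⟩ := cyl_nonempty b
  exact Set.disjoint_left.mp h (hb hx) (hb' hx)

lemma cylSet_subset_of_subset {S S' : Set (ℕ → O)} (h : S ⊆ S') (k : ℕ) :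
    cylSet S k ⊆ cylSet S' k := fun b hb => ⟨hb.1, hb.2.trans h⟩

lemma isRepr_iUnion_finset [Nonempty O] {A : ℕ → Set (ℕ → O)} {K : ℕ} (N : Finset ℕ)
    (h : ∀ n ∈ N, isRepr (A n) K) :
    isRepr (⋃ n ∈ N, A n) K ∧
      cylSet (⋃ n ∈ N, A n) K ⊆ ⋃ n ∈ N, cylSet (A n) K := by
  have hsub : ∀ b ∈ cylSet (⋃ n ∈ N, A n) K, ∃ n ∈ N, b ∈ cylSet (A n) K := by
    rintro b ⟨hlen, hb⟩
    obtain ⟨x, hx⟩ := cyl_nonempty b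
    obtain ⟨n, hn, hxn⟩ : ∃ n ∈ N, x ∈ A n := by simpa using hb hx
    rw [h n hn] at hxn
    simp only [Set.mem_iUnion] at hxn
    obtain ⟨b', hb', hxb'⟩ := hxn
    have : b = b' := eq_of_mem_cylinder (hlen.trans hb'.1.symm) hx hxb'
    subst this
    exact ⟨n, hn, hb'⟩
  constructor
  · refine le_antisymm ?_ ?_
    · intro x hx
      simp only [Set.mem_iUnion] at hx
      obtain ⟨n, hn, hxn⟩ := hx
      rw [h n hn] at hxn
      simp only [Set.mem_iUnion] at hxn ⊢
      obtain ⟨b, hb, hxb⟩ := hxn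
      exact ⟨b, ⟨hb.1, hb.2.trans (Set.subset_biUnion_of_mem hn)⟩, hxb⟩
    · intro x hx
      simp only [Set.mem_iUnion] at hx
      obtain ⟨b, hb, hxb⟩ := hx
      exact hb.2 hxb
  · intro b hb
    obtain ⟨n, hn, hbn⟩ := hsub b hb
    exact Set.mem_biUnion hn hbn

end Stmt4Aux
end

noncomputable section
namespace Stmt4Aux
open MeasureTheory
variable {O : Type*} [Countable O] [Nonempty O]

lemma tsum_muF_le {g : List O → ℝ} (hg0 : ∀ b, 0 ≤ g b)
    (hgcons : ∀ b : List O, HasSum (fun c : O => g (b ++ [c])) (g b))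
    {A : ℕ → Set (ℕ → O)} (hA : ∀ n, ∃ k, isRepr (A n) k)
    (hdis : Pairwise (Function.onFun Disjoint A))
    {k₀ : ℕ} (hS : isRepr (⋃ n, A n) k₀) :
    ∑' n, muF g (A n) ≤ muF g (⋃ n, A n) := by
  rw [ENNReal.tsum_eq_iSup_sum]
  refine iSup_le fun s => ?_
  choose kk hkk using hA
  set K := (s.sup kk) ⊔ k₀ with hK
  have hAn : ∀ n ∈ s, isRepr (A n) K ∧ muF g (A n) = wm g (cylSet (A n) K) := by
    intro n hn
    have hle : kk n ≤ K := le_sup_of_le_left (Finset.le_sup hn)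
    obtain ⟨hr, hw⟩ := isRepr_ge hg0 hgcons (hkk n) K hle
    exact ⟨hr, by rw [muF_eq hg0 hgcons (hkk n), hw]⟩
  have hSK : isRepr (⋃ n, A n) K ∧ muF g (⋃ n, A n) = wm g (cylSet (⋃ n, A n) K) := by
    obtain ⟨hr, hw⟩ := isRepr_ge hg0 hgcons hS K le_sup_right
    exact ⟨hr, by rw [muF_eq hg0 hgcons hS, hw]⟩
  calc ∑ n ∈ s, muF g (A n) = ∑ n ∈ s, wm g (cylSet (A n) K) :=
        Finset.sum_congr rfl fun n hn => (hAn n hn).2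
    _ = wm g (⋃ n ∈ s, cylSet (A n) K) := by
        rw [measure_biUnion_finset ?_ (fun n _ => listMeas _)]
        intro n hn m hm hnm
        exact cylSet_disjoint (hdis hnm) K
    _ ≤ wm g (cylSet (⋃ n, A n) K) := by
        refine measure_mono ?_
        refine Set.iUnion₂_subset fun n hn => ?_
        exact cylSet_subset_of_subset (Set.subset_iUnion A n) K
    _ = muF g (⋃ n, A n) := hSK.2.symm

lemma muF_finset_le {g : List O → ℝ} (hg0 : ∀ b, 0 ≤ g b)
    (hgcons : ∀ b : List O, HasSum (fun c : O => g (b ++ [c])) (g b))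
    {A : ℕ → Set (ℕ → O)} (N : Finset ℕ) {K : ℕ} (h : ∀ n ∈ N, isRepr (A n) K) :
    muF g (⋃ n ∈ N, A n) ≤ ∑ n ∈ N, muF g (A n) := by
  obtain ⟨hr, hsub⟩ := isRepr_iUnion_finset N h
  calc muF g (⋃ n ∈ N, A n) = wm g (cylSet (⋃ n ∈ N, A n) K) := muF_eq hg0 hgcons hr
    _ ≤ wm g (⋃ n ∈ N, cylSet (A n) K) := measure_mono hsub
    _ ≤ ∑ n ∈ N, wm g (cylSet (A n) K) := measure_biUnion_finset_le N _
    _ = ∑ n ∈ N, muF g (A n) := Finset.sum_congr rfl fun n hn =>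
        (muF_eq hg0 hgcons (h n hn)).symm

end Stmt4Aux
end

noncomputable section
namespace Stmt4Aux
open MeasureTheory
variable {O : Type*} [Countable O] [Nonempty O]

lemma cylinder_nil : cylinder ([] : List O) = Set.univ := by
  ext x; simp [mem_cylinder]

lemma cylSet_univ : cylSet (Set.univ : Set (ℕ → O)) 0 = {([] : List O)} := by
  ext b
  simp only [cylSet, Set.mem_setOf_eq, Set.mem_singleton_iff, List.length_eq_zero_iff]
  exact ⟨fun h => h.1, fun h => ⟨h, by simp⟩⟩

lemma isRepr_univ : isRepr (Set.univ : Set (ℕ → O)) 0 := by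
  rw [isRepr, cylSet_univ]
  simp [cylinder_nil]

lemma muF_univ {g : List O → ℝ} (hg0 : ∀ b, 0 ≤ g b)
    (hgcons : ∀ b : List O, HasSum (fun c : O => g (b ++ [c])) (g b)) :
    muF g (Set.univ : Set (ℕ → O)) = ENNReal.ofReal (g []) := by
  rw [muF_eq hg0 hgcons isRepr_univ, cylSet_univ, wm_apply]
  exact tsum_singleton [] (fun b => ENNReal.ofReal (g b))

lemma wm_coe_finset (g : List O → ℝ) (T : Finset (List O)) :
    wm g (↑T : Set (List O)) = ∑ b ∈ T, ENNReal.ofReal (g b) := by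
  rw [wm_apply]
  exact Finset.tsum_subtype T (fun b => ENNReal.ofReal (g b))

lemma exists_finset_approx (g : List O → ℝ) (K : Set (List O)) (hfin : wm g K ≠ ⊤)
    {δ : ENNReal} (hδ : 0 < δ) :
    ∃ T : Finset (List O), ↑T ⊆ K ∧ wm g K ≤ wm g ↑T + δ := by
  classical
  rcases le_total (wm g K) δ with h | h
  · refine ⟨∅, by simp, ?_⟩
    calc wm g K ≤ δ := h
      _ ≤ wm g ↑(∅ : Finset (List O)) + δ := le_add_self
  · have hne : wm g K ≠ 0 := by
      intro h0; rw [h0] at h; exact hδ.ne' (le_antisymm h hδ.le)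
    have h1 : wm g K - δ < wm g K := ENNReal.sub_lt_self hfin hne hδ.ne'
    conv at h1 => rw [wm_apply, ENNReal.tsum_eq_iSup_sum]
    obtain ⟨s, hs⟩ := lt_iSup_iff.mp h1
    refine ⟨s.image Subtype.val, ?_, ?_⟩
    · intro b hb
      simp only [Finset.coe_image, Set.mem_image, Finset.mem_coe] at hb
      obtain ⟨⟨b', hb'⟩, _, rfl⟩ := hb
      exact hb'
    · have heq : ∑ x ∈ s, ENNReal.ofReal (g ↑x) = wm g ↑(s.image Subtype.val) := by
        rw [wm_coe_finset, Finset.sum_image (fun x _ y _ h => Subtype.ext h)]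
      calc wm g K ≤ (wm g K - δ) + δ := le_tsub_add
        _ ≤ ∑ x ∈ s, ENNReal.ofReal (g ↑x) + δ := by
            rw [wm_apply, ENNReal.tsum_eq_iSup_sum]; exact add_le_add_left hs.le δ
        _ = wm g ↑(s.image Subtype.val) + δ := by rw [heq]

end Stmt4Aux
end

noncomputable section
namespace Stmt4Aux
open MeasureTheory
variable {O : Type*} [Countable O] [Nonempty O]

lemma geom_bound (ε : ENNReal) (j : ℕ) :
    ∑ i ∈ Finset.range j, ε / 2 ^ (i + 2) ≤ ε / 2 := by
  refine (ENNReal.sum_le_tsum (Finset.range j)).trans (le_of_eq ?_)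
  have h1 : ∀ i : ℕ, ε / 2 ^ (i + 2) = ε * 2⁻¹ ^ 2 * 2⁻¹ ^ i := by
    intro i
    rw [mul_assoc, ← pow_add, ← ENNReal.inv_pow, div_eq_mul_inv, Nat.add_comm i 2]
  calc ∑' i : ℕ, ε / 2 ^ (i + 2) = ∑' i : ℕ, ε * 2⁻¹ ^ 2 * 2⁻¹ ^ i := by
        exact tsum_congr h1
    _ = ε * 2⁻¹ ^ 2 * ∑' i : ℕ, (2:ENNReal)⁻¹ ^ i := ENNReal.tsum_mul_left
    _ = ε * 2⁻¹ ^ 2 * 2 := by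
        rw [ENNReal.tsum_geometric, ENNReal.one_sub_inv_two, inv_inv]
    _ = ε / 2 := by
        rw [div_eq_mul_inv, mul_assoc]
        congr 1
        rw [pow_two, mul_assoc, ENNReal.inv_mul_cancel two_ne_zero ENNReal.ofNat_ne_top, mul_one]

end Stmt4Aux
end

noncomputable section
namespace Stmt4Aux
open MeasureTheory
variable {O : Type*} [Countable O] [Nonempty O]

lemma muF_subadd {g : List O → ℝ} (hg0 : ∀ b, 0 ≤ g b) (hge : g [] ≤ 1)
    (hgcons : ∀ b : List O, HasSum (fun c : O => g (b ++ [c])) (g b))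
    {S : Set (ℕ → O)} {k₀ : ℕ} (hS : isRepr S k₀)
    {A : ℕ → Set (ℕ → O)} (hA : ∀ n, ∃ k, isRepr (A n) k)
    (hcover : S ⊆ ⋃ n, A n) :
    muF g S ≤ ∑' n, muF g (A n) := by
  classical
  choose kk hkk using hA
  refine ENNReal.le_of_forall_pos_le_add fun ε hε _ => ?_
  set εE : ENNReal := (ε : ENNReal) with hεEdef
  have hεE0 : εE ≠ 0 := by
    simp only [hεEdef, ne_eq, ENNReal.coe_eq_zero]
    exact hε.ne'
  have hmuS : muF g S = wm g (cylSet S k₀) := muF_eq hg0 hgcons hS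
  have hfin0 : wm g (cylSet S k₀) ≠ ⊤ := by
    rw [← hmuS]
    exact (((muF_mono g (Set.subset_univ S)).trans_eq
      (muF_univ hg0 hgcons)).trans_lt ENNReal.ofReal_lt_top).ne
  obtain ⟨T, hTsub, hTle⟩ := exists_finset_approx g (cylSet S k₀) hfin0
    (δ := εE / 2) (ENNReal.div_pos hεE0 ENNReal.ofNat_ne_top)
  have hfinT : ∀ T' : Finset (List O), wm g (↑T' : Set (List O)) ≠ ⊤ := by
    intro T'
    rw [wm_coe_finset]
    exact (ENNReal.sum_lt_top.mpr fun _ _ => ENNReal.ofReal_lt_top).ne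
  -- recursive refinement
  have step : ∀ (j : ℕ) (T' : {T' : Finset (List O) // ∀ b ∈ T', b.length = k₀ + j}),
      ∃ T'' : {T'' : Finset (List O) // ∀ b ∈ T'', b.length = k₀ + (j + 1)},
        (∀ b ∈ T''.1, ∃ b' ∈ T'.1, ∃ c : O, b = b' ++ [c]) ∧
        wm g ↑T'.1 ≤ wm g ↑T''.1 + εE / 2 ^ (j + 2) := by
    rintro j ⟨T', hT'⟩
    have hext : wm g (⋃ b ∈ (↑T' : Set (List O)), Set.range (fun c : O => b ++ [c]))
        = wm g ↑T' := wm_extend g hg0 hgcons (k := k₀ + j) _ (fun b hb => hT' b hb)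
    have hfinE : wm g (⋃ b ∈ (↑T' : Set (List O)), Set.range fun c : O => b ++ [c]) ≠ ⊤ := by
      rw [hext]; exact hfinT T'
    obtain ⟨T'', hsub, hle⟩ := exists_finset_approx g _ hfinE (δ := εE / 2 ^ (j + 2))
      (ENNReal.div_pos hεE0 (ENNReal.pow_ne_top ENNReal.ofNat_ne_top))
    have hmem : ∀ b ∈ T'', ∃ b' ∈ T', ∃ c : O, b = b' ++ [c] := by
      intro b hb
      have := hsub hb
      simp only [Set.mem_iUnion, Set.mem_range, Finset.mem_coe] at this
      obtain ⟨b', hb', c, rfl⟩ := this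
      exact ⟨b', hb', c, rfl⟩
    refine ⟨⟨T'', ?_⟩, hmem, ?_⟩
    · intro b hb
      obtain ⟨b', hb', c, rfl⟩ := hmem b hb
      simp [hT' b' hb', Nat.add_assoc]
    · rw [← hext]; exact hle
  choose FF hFF1 hFF2 using step
  set L : ∀ j : ℕ, {T' : Finset (List O) // ∀ b ∈ T', b.length = k₀ + j} :=
    fun j => Nat.rec ⟨T, fun b hb => by simpa using (hTsub hb).1⟩ (fun j Lj => FF j Lj) j
    with hLdef
  have hL0 : (L 0).1 = T := rfl
  have hLsucc : ∀ j, L (j + 1) = FF j (L j) := fun j => rfl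
  have hchain : ∀ j, wm g (↑T : Set (List O)) ≤ wm g ↑(L j).1 + εE / 2 := by
    have key : ∀ j, wm g (↑T : Set (List O))
        ≤ wm g ↑(L j).1 + ∑ i ∈ Finset.range j, εE / 2 ^ (i + 2) := by
      intro j
      induction j with
      | zero => simp [hL0]
      | succ n ih =>
        refine ih.trans ?_
        rw [Finset.sum_range_succ, ← add_assoc, add_right_comm]
        exact add_le_add_left (hFF2 n (L n)) _
    intro j
    exact (key j).trans (add_le_add_right (geom_bound εE j) _)
  -- the finite alphabets
  set arb : O := Classical.arbitrary O with harb
  set F : ℕ → Finset O :=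
    fun i => insert arb ((L (i + 1 - k₀)).1.image (fun b => b.getD i arb)) with hFdef
  have hmemF : ∀ j, ∀ b ∈ (L j).1, ∀ i, i < k₀ + j → b.getD i arb ∈ F i := by
    intro j
    induction j with
    | zero =>
      intro b hb i hi
      have h1 : i + 1 - k₀ = 0 := by omega
      rw [hFdef]
      refine Finset.mem_insert.mpr (Or.inr ?_)
      rw [h1]
      exact Finset.mem_image.mpr ⟨b, hb, rfl⟩
    | succ n ih =>
      intro b hb i hi
      obtain ⟨b', hb', c, rfl⟩ := hFF1 n (L n) b hb
      rcases Nat.lt_or_ge i (k₀ + n) with h | h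
      · have hlen : i < b'.length := by rw [(L n).2 b' hb']; exact h
        rw [List.getD_append _ _ _ _ hlen]
        exact ih b' hb' i h
      · have h1 : i + 1 - k₀ = n + 1 := by omega
        rw [hFdef]
        refine Finset.mem_insert.mpr (Or.inr ?_)
        rw [h1]
        exact Finset.mem_image.mpr ⟨b' ++ [c], hb, rfl⟩
  -- sets
  set B : ℕ → Set (ℕ → O) := fun j => ⋃ b ∈ (↑(L j).1 : Set (List O)), cylinder b with hBdef
  have hBrepr : ∀ j, cylSet (B j) (k₀ + j) = ↑(L j).1 :=
    fun j => cylSet_eq (fun b hb => (L j).2 b hb)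
  have hisReprB : ∀ j, isRepr (B j) (k₀ + j) := by
    intro j
    rw [isRepr, hBrepr j]
  have hmuB : ∀ j, muF g (B j) = wm g ↑(L j).1 := by
    intro j
    rw [muF_eq hg0 hgcons (hisReprB j), hBrepr j]
  have hBsucc : ∀ j, B (j + 1) ⊆ B j := by
    intro j x hx
    simp only [hBdef, Set.mem_iUnion, Finset.mem_coe] at hx ⊢
    obtain ⟨b, hb, hxb⟩ := hx
    obtain ⟨b', hb', c, rfl⟩ := hFF1 j (L j) b hb
    exact ⟨b', hb', cyl_subset_append b' [c] hxb⟩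
  have hBanti : Antitone B := antitone_nat_of_succ_le hBsucc
  have hB0S : B 0 ⊆ S := by
    intro x hx
    simp only [hBdef, Set.mem_iUnion, Finset.mem_coe] at hx
    obtain ⟨b, hb, hxb⟩ := hx
    rw [hL0] at hb
    exact (hTsub hb).2 hxb
  -- topology
  letI : TopologicalSpace O := ⊥
  haveI : DiscreteTopology O := ⟨rfl⟩
  have hcyl_closed : ∀ b : List O, IsClosed (cylinder b) := by
    intro b
    have hb : cylinder b = ⋂ i : Fin b.length, {x : ℕ → O | x i = b[(i : ℕ)]'i.2} := by
      ext x
      simp only [mem_cylinder, Set.mem_iInter, Set.mem_setOf_eq]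
      exact ⟨fun h i => h i i.2, fun h i hi => h ⟨i, hi⟩⟩
    rw [hb]
    refine isClosed_iInter fun i => ?_
    have heq : {x : ℕ → O | x i = b[(i : ℕ)]'i.2}
        = (fun x : ℕ → O => x (i : ℕ)) ⁻¹' {b[(i : ℕ)]'i.2} := rfl
    rw [heq]
    exact IsClosed.preimage (continuous_apply (i : ℕ)) (isClosed_discrete _)
  have hcyl_open : ∀ b : List O, IsOpen (cylinder b) := by
    intro b
    have hb : cylinder b = ⋂ i : Fin b.length, {x : ℕ → O | x i = b[(i : ℕ)]'i.2} := by
      ext x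
      simp only [mem_cylinder, Set.mem_iInter, Set.mem_setOf_eq]
      exact ⟨fun h i => h i i.2, fun h i hi => h ⟨i, hi⟩⟩
    rw [hb]
    refine isOpen_iInter_of_finite fun i => ?_
    have heq : {x : ℕ → O | x i = b[(i : ℕ)]'i.2}
        = (fun x : ℕ → O => x (i : ℕ)) ⁻¹' {b[(i : ℕ)]'i.2} := rfl
    rw [heq]
    exact IsOpen.preimage (continuous_apply (i : ℕ)) (isOpen_discrete _)
  have hAopen : ∀ n, IsOpen (A n) := by
    intro n
    rw [hkk n]
    exact isOpen_biUnion fun b _ => hcyl_open b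
  have hBclosed : ∀ j, IsClosed (B j) := by
    intro j
    exact Set.Finite.isClosed_biUnion ((L j).1.finite_toSet) fun b _ => hcyl_closed b
  set P : Set (ℕ → O) := Set.pi Set.univ (fun i => ((F i : Finset O) : Set O)) with hPdef
  have hPcomp : IsCompact P := isCompact_univ_pi fun i => (F i).finite_toSet.isCompact
  have hPclosed : IsClosed P := isClosed_set_pi fun i _ => isClosed_discrete _
  have hmemP : ∀ x : ℕ → O, x ∈ P ↔ ∀ i, x i ∈ F i := by
    intro x
    simp [hPdef, Set.mem_pi]
  have hCcomp : IsCompact (⋂ j, (B j ∩ P)) := by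
    refine (hPcomp.inter_left (hBclosed 0)).of_isClosed_subset
      (isClosed_iInter fun j => (hBclosed j).inter hPclosed) (Set.iInter_subset _ 0)
  have hCsub : (⋂ j, (B j ∩ P)) ⊆ ⋃ n, A n := by
    refine (Set.iInter_subset _ 0).trans ?_
    exact (Set.inter_subset_left.trans hB0S).trans hcover
  obtain ⟨N, hN⟩ := hCcomp.elim_finite_subcover A hAopen hCsub
  set U : Set (ℕ → O) := ⋃ n ∈ N, A n with hUdef
  have hUopen : IsOpen U := isOpen_biUnion fun n _ => hAopen n
  have hempty : (B 0 ∩ P) ∩ ⋂ j, ((B j ∩ P) ∩ Uᶜ) = ∅ := by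
    rw [Set.eq_empty_iff_forall_notMem]
    rintro x ⟨hx0, hx⟩
    simp only [Set.mem_iInter, Set.mem_inter_iff, Set.mem_compl_iff] at hx
    have hxC : x ∈ ⋂ j, (B j ∩ P) := Set.mem_iInter.mpr fun j => (hx j).1
    exact (hx 0).2 (hN hxC)
  obtain ⟨u, hu⟩ := (hPcomp.inter_left (hBclosed 0)).elim_finite_subfamily_closed
    (fun j => (B j ∩ P) ∩ Uᶜ)
    (fun j => ((hBclosed j).inter hPclosed).inter hUopen.isClosed_compl) hempty
  set M : ℕ := N.sup kk with hMdef
  set J : ℕ := max (u.sup id) M with hJdef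
  have hDJ : B J ∩ P ⊆ U := by
    intro x hx
    by_contra hxU
    have hx0 : x ∈ B 0 ∩ P := ⟨hBanti (Nat.zero_le J) hx.1, hx.2⟩
    have hxmem : x ∈ (B 0 ∩ P) ∩ ⋂ j ∈ u, ((B j ∩ P) ∩ Uᶜ) := by
      refine ⟨hx0, Set.mem_iInter₂.mpr fun j hj => ?_⟩
      have hjJ : j ≤ J := le_trans (Finset.le_sup (f := id) hj) (le_max_left _ _)
      exact ⟨⟨hBanti hjJ hx.1, hx.2⟩, hxU⟩
    rw [hu] at hxmem
    exact hxmem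
  have hBJU : B J ⊆ U := by
    intro x hx
    simp only [hBdef, Set.mem_iUnion, Finset.mem_coe] at hx
    obtain ⟨b, hb, hxb⟩ := hx
    have hblen : b.length = k₀ + J := (L J).2 b hb
    set x' : ℕ → O := fun i => if i < k₀ + J then x i else arb with hx'def
    have hx'b : x' ∈ cylinder b := by
      intro i hi
      have hik : i < k₀ + J := by rw [← hblen]; exact hi
      have := hxb i hi
      simpa [hx'def, hik] using this
    have hx'P : x' ∈ P := by
      rw [hmemP]
      intro i
      by_cases h : i < k₀ + J
      · have hib : i < b.length := by omega
        have hxi : x' i = b.getD i arb := by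
          rw [List.getD_eq_getElem _ _ hib]
          have := hx'b i hib
          simp only [List.get_eq_getElem] at this
          exact this
        rw [hxi]
        exact hmemF J b hb i h
      · have : x' i = arb := by simp [hx'def, h]
        rw [this, hFdef]
        exact Finset.mem_insert_self _ _
    have hx'BJ : x' ∈ B J := by
      simp only [hBdef, Set.mem_iUnion, Finset.mem_coe]
      exact ⟨b, hb, hx'b⟩
    have hx'U : x' ∈ U := hDJ ⟨hx'BJ, hx'P⟩
    rw [hUdef] at hx'U ⊢
    simp only [Set.mem_iUnion] at hx'U ⊢
    obtain ⟨n, hn, hx'A⟩ := hx'U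
    rw [hkk n] at hx'A
    simp only [Set.mem_iUnion] at hx'A
    obtain ⟨b'', hb'', hx'b''⟩ := hx'A
    have hxb'' : x ∈ cylinder b'' := by
      intro i hi
      have hikn : i < kk n := by rw [← hb''.1]; exact hi
      have hiJ : i < k₀ + J := by
        have h1 : kk n ≤ M := Finset.le_sup hn
        have h2 : M ≤ J := le_max_right _ _
        omega
      have := hx'b'' i hi
      simp only [hx'def, if_pos hiJ] at this
      exact this
    exact ⟨n, hn, hb''.2 hxb''⟩
  -- conclusion
  have hcommon : ∀ n ∈ N, isRepr (A n) M :=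
    fun n hn => (isRepr_ge hg0 hgcons (hkk n) M (Finset.le_sup hn)).1
  calc muF g S = wm g (cylSet S k₀) := hmuS
    _ ≤ wm g ↑T + εE / 2 := hTle
    _ ≤ (wm g ↑(L J).1 + εE / 2) + εE / 2 := add_le_add_left (hchain J) _
    _ = wm g ↑(L J).1 + εE := by rw [add_assoc, ENNReal.add_halves]
    _ = muF g (B J) + εE := by rw [hmuB J]
    _ ≤ muF g U + εE := add_le_add_left (muF_mono g hBJU) _
    _ ≤ (∑ n ∈ N, muF g (A n)) + εE := add_le_add_left (muF_finset_le hg0 hgcons N hcommon) _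
    _ ≤ (∑' n, muF g (A n)) + εE := add_le_add_left (ENNReal.sum_le_tsum N) _

end Stmt4Aux
end

open Stmt4Aux in
theorem stmt4 {O : Type*} [Countable O] [Nonempty O] (g : List O → ℝ)
    (hg0 : ∀ b, 0 ≤ g b) (hge : g [] ≤ 1)
    (hgcons : ∀ b : List O, HasSum (fun c : O => g (b ++ [c])) (g b)) :
    ∃ μ : Set (ℕ → O) → ENNReal,
      (∀ (k : ℕ) (K : Set (List O)), (∀ b ∈ K, b.length = k) →
        μ (⋃ b ∈ K, cylinder b) = ∑' b : K, ENNReal.ofReal (g b)) ∧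
      (∀ A : ℕ → Set (ℕ → O),
        (∀ n, A n ∈ cylAlg O) → Pairwise (Function.onFun Disjoint A) →
        (⋃ n, A n) ∈ cylAlg O →
        μ (⋃ n, A n) = ∑' n, μ (A n)) ∧
      μ Set.univ ≤ 1 := by
  classical
  refine ⟨muF g, ?_, ?_, ?_⟩
  · intro k K hK
    have h1 : cylSet (⋃ b ∈ K, cylinder b) k = K := cylSet_eq hK
    have hrepr : isRepr (⋃ b ∈ K, cylinder b) k := by
      rw [isRepr, h1]
    rw [muF_eq hg0 hgcons hrepr, h1, wm_apply]
  · intro A hA hdis hU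
    have hA' : ∀ n, ∃ k, isRepr (A n) k := fun n => isRepr_of_mem (hA n)
    obtain ⟨k₀, hS⟩ := isRepr_of_mem hU
    exact le_antisymm (muF_subadd hg0 hge hgcons hS hA' subset_rfl)
      (tsum_muF_le hg0 hgcons hA' hdis hS)
  · rw [muF_univ hg0 hgcons]
    calc ENNReal.ofReal (g []) ≤ ENNReal.ofReal 1 := ENNReal.ofReal_le_ofReal hge
      _ = 1 := ENNReal.ofReal_one
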